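/- Let Λ ⊂ ℂ be a lattice with End(ℂ/Λ) = ℤ (i.e., {z : zΛ ⊆ Λ} = ℤ), p prime, λ₁, λ₂ ∈ p⁻¹Λ mapping to independent p-torsion points of ℂ/Λ, and M = ℤ(λ₁, λ₂)ᵀ + Λ². Then the ring of ℂ-linear endomorphisms of ℂ² preserving M equals the set of integer matrices (a b; c d) with a ≡ d, b ≡ 0, c ≡ 0 (mod p) — i.e., ℤ·I + p·M₂(ℤ). -/

import Mathlib

theorem stmt_14 (Λ : Submodule ℤ ℂ) (bΛ : Module.Basis (Fin 2) ℤ Λ)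
    (hspan : Submodule.span ℝ (Λ : Set ℂ) = ⊤)
    (hCM : ∀ z : ℂ, (∀ x ∈ Λ, z * x ∈ Λ) ↔ ∃ n : ℤ, z = (n : ℂ))
    (p : ℕ) (hp : p.Prime) (lam1 lam2 : ℂ)
    (h1 : (p : ℂ) * lam1 ∈ Λ) (h2 : (p : ℂ) * lam2 ∈ Λ)
    (hind : ∀ a b : ℤ, (a : ℂ) * lam1 + (b : ℂ) * lam2 ∈ Λ → (p : ℤ) ∣ a ∧ (p : ℤ) ∣ b)
    (M : Set (Fin 2 → ℂ))
    (hM : M = {v | ∃ (j : ℤ) (w : Fin 2 → ℂ), (∀ i, w i ∈ Λ) ∧ v = j • ![lam1, lam2] + w}) :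
    ∀ Z : Matrix (Fin 2) (Fin 2) ℂ,
      (∀ v ∈ M, Z.mulVec v ∈ M) ↔
        ∃ (k : ℤ) (N : Matrix (Fin 2) (Fin 2) ℤ),
          Z = (k : ℂ) • (1 : Matrix (Fin 2) (Fin 2) ℂ) + (p : ℂ) • (N.map (Int.cast : ℤ → ℂ)) := by
  intro Z
  have hpne : (p : ℂ) ≠ 0 := Nat.cast_ne_zero.2 hp.ne_zero
  have hsm : ∀ (a : ℤ) (x : ℂ), x ∈ Λ → (a : ℂ) * x ∈ Λ := by
    intro a x hx
    simpa [zsmul_eq_mul] using Λ.smul_mem a hx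
  have hsmn : ∀ (x : ℂ), x ∈ Λ → (p : ℂ) * x ∈ Λ := by
    intro x hx
    have := hsm (p : ℤ) x hx
    simpa using this
  have memM : ∀ v : Fin 2 → ℂ,
      v ∈ M ↔ ∃ j : ℤ, v 0 - (j : ℂ) * lam1 ∈ Λ ∧ v 1 - (j : ℂ) * lam2 ∈ Λ := by
    intro v
    rw [hM]
    constructor
    · rintro ⟨j, w, hw, rfl⟩
      refine ⟨j, ?_, ?_⟩
      · have e : (j • ![lam1, lam2] + w) 0 - (j : ℂ) * lam1 = w 0 := by
          simp [zsmul_eq_mul]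
        rw [e]; exact hw 0
      · have e : (j • ![lam1, lam2] + w) 1 - (j : ℂ) * lam2 = w 1 := by
          simp [zsmul_eq_mul]
        rw [e]; exact hw 1
    · rintro ⟨j, hv0, hv1⟩
      refine ⟨j, ![v 0 - (j : ℂ) * lam1, v 1 - (j : ℂ) * lam2], ?_, ?_⟩
      · intro i; fin_cases i
        · exact hv0
        · exact hv1
      · funext i; fin_cases i <;> simp [zsmul_eq_mul]
  have hmv : ∀ (v : Fin 2 → ℂ) (i : Fin 2), Z.mulVec v i = Z i 0 * v 0 + Z i 1 * v 1 := by
    intro v i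
    simp [Matrix.mulVec, dotProduct, Fin.sum_univ_two]
  constructor
  · intro hZ
    -- every element of M has p * components in Λ
    have hpv : ∀ v ∈ M, ∀ i : Fin 2, (p : ℂ) * v i ∈ Λ := by
      intro v hv i
      obtain ⟨j, hv0, hv1⟩ := (memM v).1 hv
      fin_cases i
      · show (p : ℂ) * v 0 ∈ Λ
        have e : (p : ℂ) * v 0 = (p : ℂ) * (v 0 - (j : ℂ) * lam1) + (j : ℂ) * ((p : ℂ) * lam1) := by
          ring
        rw [e]; exact Λ.add_mem (hsmn _ hv0) (hsm j _ h1)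
      · show (p : ℂ) * v 1 ∈ Λ
        have e : (p : ℂ) * v 1 = (p : ℂ) * (v 1 - (j : ℂ) * lam2) + (j : ℂ) * ((p : ℂ) * lam2) := by
          ring
        rw [e]; exact Λ.add_mem (hsmn _ hv1) (hsm j _ h2)
    -- the entries of p • Z are integers
    have hint : ∀ i j : Fin 2, ∃ a : ℤ, (p : ℂ) * Z i j = (a : ℂ) := by
      intro i j
      refine (hCM ((p : ℂ) * Z i j)).1 ?_
      intro x hx
      fin_cases j
      · have hvM : (![x, 0] : Fin 2 → ℂ) ∈ M := by
          refine (memM _).2 ⟨0, ?_, ?_⟩ <;> simpa using (by first | exact hx | exact Λ.zero_mem)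
        show (p : ℂ) * Z i 0 * x ∈ Λ
        have := hpv _ (hZ _ hvM) i
        rw [hmv] at this
        have e : (p : ℂ) * Z i 0 * x = (p : ℂ) * (Z i 0 * (![x, 0] : Fin 2 → ℂ) 0 + Z i 1 * (![x, 0] : Fin 2 → ℂ) 1) := by
          simp; ring
        rw [e]; exact this
      · have hvM : (![0, x] : Fin 2 → ℂ) ∈ M := by
          refine (memM _).2 ⟨0, ?_, ?_⟩ <;> simpa using (by first | exact hx | exact Λ.zero_mem)
        show (p : ℂ) * Z i 1 * x ∈ Λ
        have := hpv _ (hZ _ hvM) i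
        rw [hmv] at this
        have e : (p : ℂ) * Z i 1 * x = (p : ℂ) * (Z i 0 * (![0, x] : Fin 2 → ℂ) 0 + Z i 1 * (![0, x] : Fin 2 → ℂ) 1) := by
          simp; ring
        rw [e]; exact this
    choose A hA using hint
    -- apply Z to (lam1, lam2)
    have hMlam : (![lam1, lam2] : Fin 2 → ℂ) ∈ M := by
      refine (memM _).2 ⟨1, ?_, ?_⟩ <;> simpa using Λ.zero_mem
    obtain ⟨k0, hk0, hk1⟩ := (memM _).1 (hZ _ hMlam)
    have hmvl : ∀ i : Fin 2, Z.mulVec ![lam1, lam2] i = Z i 0 * lam1 + Z i 1 * lam2 := by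
      intro i; rw [hmv]; simp
    -- p divides all entries of A
    have hdvd : ∀ i j : Fin 2, (p : ℤ) ∣ A i j := by
      have h00 : ((A 0 0 - p * k0 : ℤ) : ℂ) * lam1 + ((A 0 1 : ℤ) : ℂ) * lam2 ∈ Λ := by
        have hmem := hsmn _ hk0
        rw [hmvl 0] at hmem
        have e : ((A 0 0 - p * k0 : ℤ) : ℂ) * lam1 + ((A 0 1 : ℤ) : ℂ) * lam2
            = (p : ℂ) * (Z 0 0 * lam1 + Z 0 1 * lam2 - (k0 : ℂ) * lam1) := by
          push_cast
          linear_combination (-lam1) * hA 0 0 - lam2 * hA 0 1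
        rw [e]; exact hmem
      have h10 : ((A 1 0 : ℤ) : ℂ) * lam1 + ((A 1 1 - p * k0 : ℤ) : ℂ) * lam2 ∈ Λ := by
        have hmem := hsmn _ hk1
        rw [hmvl 1] at hmem
        have e : ((A 1 0 : ℤ) : ℂ) * lam1 + ((A 1 1 - p * k0 : ℤ) : ℂ) * lam2
            = (p : ℂ) * (Z 1 0 * lam1 + Z 1 1 * lam2 - (k0 : ℂ) * lam2) := by
          push_cast
          linear_combination (-lam1) * hA 1 0 - lam2 * hA 1 1
        rw [e]; exact hmem
      obtain ⟨d1, d2⟩ := hind _ _ h00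
      obtain ⟨d3, d4⟩ := hind _ _ h10
      intro i j
      fin_cases i <;> fin_cases j
      · show (p : ℤ) ∣ A 0 0
        obtain ⟨t, ht⟩ := d1; exact ⟨t + k0, by linarith⟩
      · exact d2
      · exact d3
      · show (p : ℤ) ∣ A 1 1
        obtain ⟨t, ht⟩ := d4; exact ⟨t + k0, by linarith⟩
    choose B hB using fun i j => hdvd i j
    -- Z has integer entries B
    have hZB : ∀ i j : Fin 2, Z i j = ((B i j : ℤ) : ℂ) := by
      intro i j
      have h := hA i j
      rw [hB i j] at h
      push_cast at h
      exact mul_left_cancel₀ hpne h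
    -- congruences mod p for B
    have hc0 : ((B 0 0 - k0 : ℤ) : ℂ) * lam1 + ((B 0 1 : ℤ) : ℂ) * lam2 ∈ Λ := by
      have e : ((B 0 0 - k0 : ℤ) : ℂ) * lam1 + ((B 0 1 : ℤ) : ℂ) * lam2
          = Z.mulVec ![lam1, lam2] 0 - (k0 : ℂ) * lam1 := by
        rw [hmvl 0, hZB 0 0, hZB 0 1]; push_cast; ring
      rw [e]; exact hk0
    have hc1 : ((B 1 0 : ℤ) : ℂ) * lam1 + ((B 1 1 - k0 : ℤ) : ℂ) * lam2 ∈ Λ := by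
      have e : ((B 1 0 : ℤ) : ℂ) * lam1 + ((B 1 1 - k0 : ℤ) : ℂ) * lam2
          = Z.mulVec ![lam1, lam2] 1 - (k0 : ℂ) * lam2 := by
        rw [hmvl 1, hZB 1 0, hZB 1 1]; push_cast; ring
      rw [e]; exact hk1
    obtain ⟨e1, e2⟩ := hind _ _ hc0
    obtain ⟨e3, e4⟩ := hind _ _ hc1
    obtain ⟨c00, hc00⟩ := e1
    obtain ⟨c01, hc01⟩ := e2
    obtain ⟨c10, hc10⟩ := e3
    obtain ⟨c11, hc11⟩ := e4
    refine ⟨k0, Matrix.of ![![c00, c01], ![c10, c11]], ?_⟩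
    ext i j
    fin_cases i <;> fin_cases j <;>
      simp [hZB, Matrix.one_apply, Matrix.map_apply, Matrix.add_apply, smul_eq_mul]
    · have : B 0 0 = k0 + p * c00 := by linarith [hc00]
      rw [this]; push_cast; ring
    · have : B 0 1 = p * c01 := hc01
      rw [this]; push_cast; ring
    · have : B 1 0 = p * c10 := hc10
      rw [this]; push_cast; ring
    · have : B 1 1 = k0 + p * c11 := by linarith [hc11]
      rw [this]; push_cast; ring
  · rintro ⟨k, N, rfl⟩
    intro v hv
    obtain ⟨j, hv0, hv1⟩ := (memM v).1 hv
    refine (memM _).2 ⟨k * j, ?_, ?_⟩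
    · have e : ((k : ℂ) • (1 : Matrix (Fin 2) (Fin 2) ℂ) + (p : ℂ) • (N.map (Int.cast : ℤ → ℂ))).mulVec v 0 - ((k * j : ℤ) : ℂ) * lam1
        = (k : ℂ) * (v 0 - (j : ℂ) * lam1)
          + ((N 0 0 : ℤ) : ℂ) * ((p : ℂ) * (v 0 - (j : ℂ) * lam1) + (j : ℂ) * ((p : ℂ) * lam1))
          + ((N 0 1 : ℤ) : ℂ) * ((p : ℂ) * (v 1 - (j : ℂ) * lam2) + (j : ℂ) * ((p : ℂ) * lam2)) := by
        rw [hmv]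
        simp [Matrix.one_apply, Matrix.map_apply, smul_eq_mul]
        push_cast
        ring
      rw [e]
      exact Λ.add_mem (Λ.add_mem (hsm k _ hv0)
          (hsm (N 0 0) _ (Λ.add_mem (hsmn _ hv0) (hsm j _ h1))))
        (hsm (N 0 1) _ (Λ.add_mem (hsmn _ hv1) (hsm j _ h2)))
    · have e : ((k : ℂ) • (1 : Matrix (Fin 2) (Fin 2) ℂ) + (p : ℂ) • (N.map (Int.cast : ℤ → ℂ))).mulVec v 1 - ((k * j : ℤ) : ℂ) * lam2
        = (k : ℂ) * (v 1 - (j : ℂ) * lam2)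
          + ((N 1 0 : ℤ) : ℂ) * ((p : ℂ) * (v 0 - (j : ℂ) * lam1) + (j : ℂ) * ((p : ℂ) * lam1))
          + ((N 1 1 : ℤ) : ℂ) * ((p : ℂ) * (v 1 - (j : ℂ) * lam2) + (j : ℂ) * ((p : ℂ) * lam2)) := by
        rw [hmv]
        simp [Matrix.one_apply, Matrix.map_apply, smul_eq_mul]
        push_cast
        ring
      rw [e]
      exact Λ.add_mem (Λ.add_mem (hsm k _ hv1)
          (hsm (N 1 0) _ (Λ.add_mem (hsmn _ hv0) (hsm j _ h1))))
        (hsm (N 1 1) _ (Λ.add_mem (hsmn _ hv1) (hsm j _ h2)))
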